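/- (Proposition 1.) The value function of the reward-augmented process equals the safety probability: E[ Σ_{k=0}^∞ r(S_k) ] = P( X_k ∈ C for all k ∈ {0, …, N} ), where for each sample path ω the augmented trajectory S_k(ω) is built from the realized trajectory k ↦ X_k(ω). Moreover this common value lies in the interval [0, 1]. -/

import Mathlib

open scoped Classical

/-- A pair `(h, y)` is absorbing iff `h < 0` or `y ∉ C`. -/
def IsAbsorbing {𝒳 : Type*} (C : Set 𝒳) (s : ℝ × 𝒳) : Prop :=
  s.1 < 0 ∨ s.2 ∉ C

/-- Reward: `1` if `0 ≤ h < Δt` and `(h, y)` is not absorbing, else `0`. -/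
noncomputable def reward {𝒳 : Type*} (C : Set 𝒳) (Δt : ℝ) (s : ℝ × 𝒳) : ℝ :=
  if 0 ≤ s.1 ∧ s.1 < Δt ∧ ¬ IsAbsorbing C s then 1 else 0

/-- The augmented trajectory built from a realized trajectory `x`. -/
noncomputable def augTraj {𝒳 : Type*} (C : Set 𝒳) (Δt τ : ℝ) (x : ℕ → 𝒳) : ℕ → ℝ × 𝒳
  | 0 => (τ, x 0)
  | k + 1 =>
      if IsAbsorbing C (augTraj C Δt τ x k) then augTraj C Δt τ x k
      else ((augTraj C Δt τ x k).1 - Δt, x (k + 1))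

open MeasureTheory

section Aux

variable {𝒳 : Type*} {C : Set 𝒳} {Δt τ : ℝ} {x : ℕ → 𝒳}

lemma reward_of_absorbing {s : ℝ × 𝒳} (h : IsAbsorbing C s) : reward C Δt s = 0 := by
  simp [reward, h]

lemma augTraj_frozen {k : ℕ} (h : IsAbsorbing C (augTraj C Δt τ x k)) :
    ∀ j, augTraj C Δt τ x (k + j) = augTraj C Δt τ x k := by
  intro j
  induction j with
  | zero => rfl
  | succ j ih =>
    have : k + (j + 1) = (k + j) + 1 := by omega
    rw [this]
    show (if IsAbsorbing C (augTraj C Δt τ x (k + j)) then augTraj C Δt τ x (k + j)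
      else ((augTraj C Δt τ x (k + j)).1 - Δt, x ((k + j) + 1))) = _
    rw [ih, if_pos h]

lemma mul_le_of_le_floor (hΔt : 0 < Δt) (hτ : 0 ≤ τ) {n : ℕ} (hn : n ≤ ⌊τ / Δt⌋₊) :
    (n : ℝ) * Δt ≤ τ := by
  have h1 : (n : ℝ) ≤ τ / Δt :=
    le_trans (Nat.cast_le.2 hn) (Nat.floor_le (div_nonneg hτ hΔt.le))
  calc (n : ℝ) * Δt ≤ (τ / Δt) * Δt := by nlinarith
    _ = τ := div_mul_cancel₀ τ hΔt.ne'

lemma lt_succ_floor_mul (hΔt : 0 < Δt) (hτ : 0 ≤ τ) :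
    τ < ((⌊τ / Δt⌋₊ : ℝ) + 1) * Δt := by
  have h1 : τ / Δt < (⌊τ / Δt⌋₊ : ℝ) + 1 := Nat.lt_floor_add_one _
  calc τ = (τ / Δt) * Δt := (div_mul_cancel₀ τ hΔt.ne').symm
    _ < ((⌊τ / Δt⌋₊ : ℝ) + 1) * Δt := by nlinarith

lemma augTraj_eq (hΔt : 0 < Δt) (hτ : 0 ≤ τ) :
    ∀ n ≤ ⌊τ / Δt⌋₊, (∀ j < n, x j ∈ C) → augTraj C Δt τ x n = (τ - n * Δt, x n) := by
  intro n
  induction n with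
  | zero => intro _ _; simp [augTraj]
  | succ n ih =>
    intro hn hsafe
    have hn' : n ≤ ⌊τ / Δt⌋₊ := le_of_lt (Nat.lt_of_succ_le hn)
    have heq := ih hn' (fun j hj => hsafe j (hj.trans (Nat.lt_succ_self n)))
    have hnab : ¬ IsAbsorbing C (augTraj C Δt τ x n) := by
      rw [heq]
      rintro (h | h)
      · have := mul_le_of_le_floor hΔt hτ hn'
        simp only at h
        linarith
      · exact h (hsafe n (Nat.lt_succ_self n))
    show (if IsAbsorbing C (augTraj C Δt τ x n) then augTraj C Δt τ x n
      else ((augTraj C Δt τ x n).1 - Δt, x (n + 1))) = _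
    rw [if_neg hnab, heq]
    simp only [Prod.mk.injEq]
    constructor
    · push_cast; ring
    · trivial

lemma reward_lt_floor (hΔt : 0 < Δt) (hτ : 0 ≤ τ) {k : ℕ} (hk : k < ⌊τ / Δt⌋₊)
    (hsafe : ∀ j < k, x j ∈ C) : reward C Δt (augTraj C Δt τ x k) = 0 := by
  rw [augTraj_eq hΔt hτ k hk.le hsafe]
  have h1 : ((k : ℝ) + 1) * Δt ≤ τ := by
    have := mul_le_of_le_floor hΔt hτ (Nat.succ_le_of_lt hk)
    push_cast at this
    linarith
  rw [reward, if_neg]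
  rintro ⟨-, h2, -⟩
  simp only at h2
  linarith

lemma tsum_reward_eq (hΔt : 0 < Δt) (hτ : 0 ≤ τ) (x : ℕ → 𝒳) :
    ∑' k : ℕ, reward C Δt (augTraj C Δt τ x k) =
      if ∀ k ≤ ⌊τ / Δt⌋₊, x k ∈ C then 1 else 0 := by
  set N := ⌊τ / Δt⌋₊ with hN
  by_cases hsafe : ∀ k ≤ N, x k ∈ C
  · rw [if_pos hsafe]
    have hSN : augTraj C Δt τ x N = (τ - N * Δt, x N) :=
      augTraj_eq hΔt hτ N le_rfl (fun j hj => hsafe j hj.le)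
    have hNle : (N : ℝ) * Δt ≤ τ := mul_le_of_le_floor hΔt hτ le_rfl
    have hlt : τ < ((N : ℝ) + 1) * Δt := lt_succ_floor_mul hΔt hτ
    have hnab : ¬ IsAbsorbing C (augTraj C Δt τ x N) := by
      rw [hSN]
      rintro (h | h)
      · simp only at h; linarith
      · exact h (hsafe N le_rfl)
    have hSN1 : augTraj C Δt τ x (N + 1) = (τ - N * Δt - Δt, x (N + 1)) := by
      show (if IsAbsorbing C (augTraj C Δt τ x N) then augTraj C Δt τ x N
        else ((augTraj C Δt τ x N).1 - Δt, x (N + 1))) = _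
      rw [if_neg hnab, hSN]
    have hab1 : IsAbsorbing C (augTraj C Δt τ x (N + 1)) := by
      rw [hSN1]; left; simp only; linarith
    rw [tsum_eq_single N]
    · rw [hSN, reward, if_pos]
      refine ⟨by simp only; linarith, by simp only; linarith, ?_⟩
      rw [← hSN]; exact hnab
    · intro k hk
      rcases lt_or_gt_of_ne hk with h | h
      · exact reward_lt_floor hΔt hτ h (fun j hj => hsafe j (hj.trans h).le)
      · obtain ⟨j, rfl⟩ := Nat.exists_eq_add_of_le (Nat.succ_le_of_lt h)
        rw [augTraj_frozen hab1 j]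
        exact reward_of_absorbing hab1
  · rw [if_neg hsafe]
    push_neg at hsafe
    have hex : ∃ k, k ≤ ⌊τ / Δt⌋₊ ∧ x k ∉ C := hsafe
    have hm := Nat.find_spec hex
    set m := Nat.find hex with hmdef
    obtain ⟨hmN, hmC⟩ := hm
    have hmin : ∀ j < m, x j ∈ C := by
      intro j hj
      by_contra hc
      exact Nat.find_min hex hj ⟨(hj.trans_le hmN).le, hc⟩
    have hSm : augTraj C Δt τ x m = (τ - m * Δt, x m) :=
      augTraj_eq hΔt hτ m hmN hmin
    have habm : IsAbsorbing C (augTraj C Δt τ x m) := by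
      rw [hSm]; right; exact hmC
    have hall : ∀ k, reward C Δt (augTraj C Δt τ x k) = 0 := by
      intro k
      rcases lt_or_ge k m with h | h
      · exact reward_lt_floor hΔt hτ (h.trans_le hmN) (fun j hj => hmin j (hj.trans h))
      · obtain ⟨j, rfl⟩ := Nat.exists_eq_add_of_le h
        rw [augTraj_frozen habm j]
        exact reward_of_absorbing habm
    simp [hall]

end Aux

/-- Proposition 1: the expected total return of the augmented
process equals the safety probability `P(X k ∈ C for all k ∈ {0,…,N})`, and
this common value lies in `[0, 1]`. -/
theorem stmt_4 {Ω : Type*} [MeasurableSpace Ω] (P : Measure Ω) [IsProbabilityMeasure P]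
    {𝒳 : Type*} [MeasurableSpace 𝒳] (X : ℕ → Ω → 𝒳) (hX : ∀ k, Measurable (X k))
    (C : Set 𝒳) (hC : MeasurableSet C) (Δt τ : ℝ) (hΔt : 0 < Δt) (hτ : 0 ≤ τ) :
    (∫ ω, (∑' k : ℕ, reward C Δt (augTraj C Δt τ (fun n => X n ω) k)) ∂P =
      (P {ω | ∀ k ≤ ⌊τ / Δt⌋₊, X k ω ∈ C}).toReal) ∧
    0 ≤ ∫ ω, (∑' k : ℕ, reward C Δt (augTraj C Δt τ (fun n => X n ω) k)) ∂P ∧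
    ∫ ω, (∑' k : ℕ, reward C Δt (augTraj C Δt τ (fun n => X n ω) k)) ∂P ≤ 1 := by
  set A : Set Ω := {ω | ∀ k ≤ ⌊τ / Δt⌋₊, X k ω ∈ C} with hAdef
  have hA : MeasurableSet A := by
    have : A = ⋂ k ∈ Set.Iic ⌊τ / Δt⌋₊, X k ⁻¹' C := by
      ext ω; simp [hAdef]
    rw [this]
    exact MeasurableSet.biInter (Set.to_countable _) fun k _ => (hX k) hC
  have hfun : ∀ ω, (∑' k : ℕ, reward C Δt (augTraj C Δt τ (fun n => X n ω) k)) =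
      A.indicator (fun _ => (1 : ℝ)) ω := by
    intro ω
    rw [tsum_reward_eq hΔt hτ]
    rw [Set.indicator_apply]
    rfl
  have hint : ∫ ω, (∑' k : ℕ, reward C Δt (augTraj C Δt τ (fun n => X n ω) k)) ∂P =
      (P A).toReal := by
    rw [integral_congr_ae (Filter.Eventually.of_forall hfun)]
    rw [integral_indicator_const (1 : ℝ) hA]
    simp
    rfl
  refine ⟨hint, ?_, ?_⟩
  · rw [hint]; exact ENNReal.toReal_nonneg
  · rw [hint]
    calc (P A).toReal ≤ (P Set.univ).toReal :=
          ENNReal.toReal_mono (measure_ne_top _ _) (measure_mono (Set.subset_univ _))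
      _ = 1 := by simp
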